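/- If H = A × C is a finitely presented group and C is finitely generated, then A is finitely presentable. -/

import Mathlib

/-- A group is finitely presentable if it is isomorphic to `F/⟪R⟫` for a free
group `F` of finite rank and `R` the normal closure of a finite set of
relators. -/
def FinitelyPresentable (G : Type*) [Group G] : Prop :=
  ∃ (n : ℕ) (rels : Finset (FreeGroup (Fin n))),
    Nonempty (G ≃* PresentedGroup (rels : Set (FreeGroup (Fin n))))

/-- If `H = A × C` is a finitely presented group and `C` is finitely
generated, then `A` is finitely presentable. -/
theorem statement10 {A C : Type*} [Group A] [Group C]
    (hH : FinitelyPresentable (A × C)) (hC : Group.FG C) :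
    FinitelyPresentable A := by
  classical
  obtain ⟨n, rels, ⟨e⟩⟩ := hH
  obtain ⟨m, Sc, -, hSc⟩ := Group.fg_iff'.mp hC
  set T : Set (A × C) := ⇑(MonoidHom.inr A C) '' ↑Sc with hT
  -- normal closure of T is the kernel of the first projection
  have hker : Subgroup.normalClosure T = (MonoidHom.fst A C).ker := by
    apply le_antisymm
    · refine Subgroup.normalClosure_le_normal ?_
      rintro x ⟨c, -, rfl⟩
      simp [MonoidHom.mem_ker, Subgroup.mem_prod]
    · intro x hx
      have hx1 : x = MonoidHom.inr A C x.2 := by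
        have : x.1 = 1 := hx
        ext <;> simp [this]
      have hmem : x ∈ Subgroup.map (MonoidHom.inr A C) ⊤ := by
        rw [hx1]
        exact Subgroup.mem_map_of_mem _ (Subgroup.mem_top _)
      rw [← hSc, MonoidHom.map_closure] at hmem
      exact Subgroup.closure_le_normalClosure hmem
  -- A is isomorphic to (A × C) / normalClosure T
  have fst_surj : Function.Surjective (MonoidHom.fst A C) := fun a => ⟨(a, 1), rfl⟩
  let eA : (A × C) ⧸ Subgroup.normalClosure T ≃* A :=
    (QuotientGroup.quotientMulEquivOfEq hker).trans
      (QuotientGroup.quotientKerEquivOfSurjective _ fst_surj)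
  -- transfer along e
  let e2 : (A × C) ⧸ Subgroup.normalClosure T ≃*
      PresentedGroup (rels : Set (FreeGroup (Fin n))) ⧸ Subgroup.normalClosure (⇑e '' T) :=
    QuotientGroup.congr _ _ e
      (Subgroup.map_normalClosure T e.toMonoidHom e.surjective)
  -- lift generators of the image to the free group
  have msurj : Function.Surjective
      (QuotientGroup.mk' (Subgroup.normalClosure (rels : Set (FreeGroup (Fin n))))) :=
    QuotientGroup.mk'_surjective _
  set g : C → FreeGroup (Fin n) := fun c =>
    Function.surjInv msurj (e (MonoidHom.inr A C c)) with hg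
  have hgval : ∀ c : C,
      QuotientGroup.mk' (Subgroup.normalClosure (rels : Set (FreeGroup (Fin n)))) (g c)
        = e (MonoidHom.inr A C c) := fun c => Function.surjInv_eq msurj _
  set rels' : Finset (FreeGroup (Fin n)) := rels ∪ Sc.image g with hrels'
  have hcoe : (rels' : Set (FreeGroup (Fin n))) = ↑rels ∪ g '' ↑Sc := by
    simp [hrels']
  set N := Subgroup.normalClosure (rels : Set (FreeGroup (Fin n))) with hN
  set M := Subgroup.normalClosure (rels' : Set (FreeGroup (Fin n))) with hM
  have hNM : N ≤ M := by
    rw [hN, hM, hcoe]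
    exact Subgroup.normalClosure_mono Set.subset_union_left
  have hMmap : M.map (QuotientGroup.mk' N) = Subgroup.normalClosure (⇑e '' T) := by
    rw [hM, Subgroup.map_normalClosure _ _ msurj, hcoe, Set.image_union]
    apply le_antisymm
    · refine @Subgroup.normalClosure_le_normal _ _ _ _ Subgroup.normalClosure_normal ?_
      rintro x (⟨r, hr, rfl⟩ | hx)
      · have : (r : FreeGroup (Fin n)) ∈ N :=
          Subgroup.subset_normalClosure hr
        have h1 : QuotientGroup.mk' N r = 1 := (QuotientGroup.eq_one_iff _).mpr this
        rw [h1]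
        exact Subgroup.one_mem _
      · apply Subgroup.subset_normalClosure
        rw [hT, Set.image_image]
        rw [Set.image_image] at hx
        obtain ⟨c, hc, rfl⟩ := hx
        exact ⟨c, hc, (hgval c).symm⟩
    · refine @Subgroup.normalClosure_le_normal _ _ _ _ Subgroup.normalClosure_normal ?_
      rw [hT, Set.image_image]
      rintro x ⟨c, hc, rfl⟩
      apply Subgroup.subset_normalClosure
      refine Set.mem_union_right _ ?_
      rw [Set.image_image]
      exact ⟨c, hc, hgval c⟩
  haveI : (Subgroup.map (QuotientGroup.mk' N) M : Subgroup (PresentedGroup (rels : Set (FreeGroup (Fin n))))).Normal := by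
    exact (congrArg Subgroup.Normal hMmap).mpr Subgroup.normalClosure_normal
  let e3 : PresentedGroup (rels : Set (FreeGroup (Fin n))) ⧸
      Subgroup.normalClosure (⇑e '' T) ≃* PresentedGroup (rels' : Set (FreeGroup (Fin n))) :=
    (@QuotientGroup.quotientMulEquivOfEq (PresentedGroup (rels : Set (FreeGroup (Fin n)))) _ _ _ Subgroup.normalClosure_normal this hMmap.symm).trans
      (QuotientGroup.quotientQuotientEquivQuotient N M hNM)
  exact ⟨n, rels', ⟨eA.symm.trans (e2.trans e3)⟩⟩
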